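/- arXiv:1610.08841 — 2 statements merged into one kernel-verified Lean document; each statement's English description precedes it below -/
import Mathlib

section
/- Let b, c be vectors in ℂ^n, not both zero. Then ‖b b† − c c†‖_F / (‖b‖ + ‖c‖) ≤ min over real θ of ‖e^{iθ} b − c‖ ≤ √2 ‖b b† − c c†‖_F / sqrt(‖b‖² + ‖c‖²). -/
open Matrix

noncomputable def vnorm {n : ℕ} (v : Fin n → ℂ) : ℝ :=
  Real.sqrt (∑ i, ‖v i‖ ^ 2)

noncomputable def frob {n : ℕ} (A : Matrix (Fin n) (Fin n) ℂ) : ℝ :=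
  Real.sqrt (∑ i, ∑ j, ‖A i j‖ ^ 2)

set_option maxHeartbeats 1600000 in
theorem outer_diff_bounds {n : ℕ} (b c : Fin n → ℂ) (h : ¬(b = 0 ∧ c = 0)) :
    frob (vecMulVec b (star b) - vecMulVec c (star c)) / (vnorm b + vnorm c) ≤
        (⨅ θ : ℝ, vnorm (fun i => Complex.exp (θ * Complex.I) * b i - c i)) ∧
      (⨅ θ : ℝ, vnorm (fun i => Complex.exp (θ * Complex.I) * b i - c i)) ≤
        Real.sqrt 2 * frob (vecMulVec b (star b) - vecMulVec c (star c)) /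
          Real.sqrt (vnorm b ^ 2 + vnorm c ^ 2) := by
  classical
  set B : ℝ := ∑ i, ‖b i‖ ^ 2 with hB
  set C : ℝ := ∑ i, ‖c i‖ ^ 2 with hC
  set w : ℂ := ∑ i, b i * (starRingEnd ℂ) (c i) with hw
  set t : ℝ := ‖w‖ with ht
  have hB0 : 0 ≤ B := Finset.sum_nonneg fun i _ => by positivity
  have hC0 : 0 ≤ C := Finset.sum_nonneg fun i _ => by positivity
  have ht0 : 0 ≤ t := norm_nonneg w
  -- vnorms
  have hvb : vnorm b = Real.sqrt B := rfl
  have hvc : vnorm c = Real.sqrt C := rfl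
  have hvb2 : vnorm b ^ 2 = B := Real.sq_sqrt hB0
  have hvc2 : vnorm c ^ 2 = C := Real.sq_sqrt hC0
  set β := vnorm b with hβ
  set γ := vnorm c with hγ
  have hβ0 : 0 ≤ β := Real.sqrt_nonneg _
  have hγ0 : 0 ≤ γ := Real.sqrt_nonneg _
  have hp : (β * γ) ^ 2 = B * C := by
    rw [mul_pow, hvb2, hvc2]
  -- Cauchy-Schwarz
  have hcs : t ≤ β * γ := by
    have h1 := norm_inner_le_norm (𝕜 := ℂ) ((WithLp.equiv 2 (Fin n → ℂ)).symm c)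
      ((WithLp.equiv 2 (Fin n → ℂ)).symm b)
    rw [EuclideanSpace.norm_eq, EuclideanSpace.norm_eq, PiLp.inner_apply] at h1
    simp only [RCLike.inner_apply, WithLp.equiv_symm_apply, WithLp.ofLp_toLp] at h1
    have hwe : (∑ i, (starRingEnd ℂ) (c i) * b i) = w := by
      rw [hw]; exact Finset.sum_congr rfl fun i _ => mul_comm _ _
    rw [← hw, mul_comm] at h1
    simpa [ht, hβ, hγ, vnorm] using h1
  have h2t : 2 * t ≤ B + C := by
    nlinarith [sq_nonneg (β - γ)]
  -- not both zero
  have hBC : 0 < B + C := by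
    rcases (lt_or_eq_of_le (add_nonneg hB0 hC0)) with h' | h'
    · exact h'
    · exfalso
      apply h
      have hBz : B = 0 := by nlinarith
      have hCz : C = 0 := by nlinarith
      constructor
      · funext i
        have h3 : ‖b i‖ ^ 2 = 0 := by
          have := (Finset.sum_eq_zero_iff_of_nonneg
            (fun j (_ : j ∈ Finset.univ) => (by positivity : (0:ℝ) ≤ ‖b j‖ ^ 2))).1 hBz i
            (Finset.mem_univ i)
          exact this
        simpa using pow_eq_zero_iff (n := 2) (by norm_num) |>.1 h3
      · funext i
        have h3 : ‖c i‖ ^ 2 = 0 := by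
          have := (Finset.sum_eq_zero_iff_of_nonneg
            (fun j (_ : j ∈ Finset.univ) => (by positivity : (0:ℝ) ≤ ‖c j‖ ^ 2))).1 hCz i
            (Finset.mem_univ i)
          exact this
        simpa using pow_eq_zero_iff (n := 2) (by norm_num) |>.1 h3
  have hβγpos : 0 < β + γ := by
    rcases lt_or_ge 0 B with hb' | hb'
    · have : 0 < β := Real.sqrt_pos.2 hb'
      linarith
    · have : 0 < C := by linarith
      have : 0 < γ := Real.sqrt_pos.2 this
      linarith
  -- pointwise norm formula
  have hpt : ∀ θ : ℝ, (∑ i, ‖Complex.exp (θ * Complex.I) * b i - c i‖ ^ 2)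
      = B + C - 2 * (Complex.exp (θ * Complex.I) * w).re := by
    intro θ
    have hterm : ∀ i, ‖Complex.exp (θ * Complex.I) * b i - c i‖ ^ 2
        = ‖b i‖ ^ 2 + ‖c i‖ ^ 2
          - 2 * (Complex.exp (θ * Complex.I) * (b i * (starRingEnd ℂ) (c i))).re := by
      intro i
      rw [Complex.sq_norm, Complex.normSq_sub, Complex.normSq_mul]
      have he : Complex.normSq (Complex.exp (θ * Complex.I)) = 1 := by
        rw [← Complex.sq_norm, Complex.norm_exp_ofReal_mul_I]; norm_num
      rw [he, one_mul, mul_assoc]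
      simp [Complex.sq_norm]
    rw [Finset.sum_congr rfl fun i _ => hterm i]
    rw [Finset.sum_sub_distrib, Finset.sum_add_distrib]
    congr 1
    rw [← Finset.mul_sum, ← Complex.re_sum, ← Finset.mul_sum]
  -- frobenius formula
  have hfr : (∑ i, ∑ j, ‖(vecMulVec b (star b) - vecMulVec c (star c)) i j‖ ^ 2)
      = B ^ 2 + C ^ 2 - 2 * t ^ 2 := by
    have hterm : ∀ i j, ‖(vecMulVec b (star b) - vecMulVec c (star c)) i j‖ ^ 2
        = ‖b i‖ ^ 2 * ‖b j‖ ^ 2 + ‖c i‖ ^ 2 * ‖c j‖ ^ 2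
          - 2 * ((b i * (starRingEnd ℂ) (c i))
              * (starRingEnd ℂ) (b j * (starRingEnd ℂ) (c j))).re := by
      intro i j
      rw [Matrix.sub_apply, Matrix.vecMulVec_apply, Matrix.vecMulVec_apply]
      have : (star b) j = (starRingEnd ℂ) (b j) := rfl
      rw [this]
      have : (star c) j = (starRingEnd ℂ) (c j) := rfl
      rw [this]
      rw [Complex.sq_norm, Complex.normSq_sub]
      simp only [Complex.normSq_mul, Complex.normSq_conj]
      have hre : (b i * (starRingEnd ℂ) (b j) * (starRingEnd ℂ) (c i * (starRingEnd ℂ) (c j)))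
          = (b i * (starRingEnd ℂ) (c i)) * (starRingEnd ℂ) (b j * (starRingEnd ℂ) (c j)) := by
        simp only [_root_.map_mul, Complex.conj_conj]
        ring
      rw [hre]
      simp [Complex.sq_norm]
    rw [Finset.sum_congr rfl fun i _ => Finset.sum_congr rfl fun j _ => hterm i j]
    have key : (∑ i, ∑ j, ((b i * (starRingEnd ℂ) (c i))
              * (starRingEnd ℂ) (b j * (starRingEnd ℂ) (c j))).re)
        = (w * (starRingEnd ℂ) w).re := by
      have hww : w * (starRingEnd ℂ) w
          = ∑ i, ∑ j, (b i * (starRingEnd ℂ) (c i))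
              * (starRingEnd ℂ) (b j * (starRingEnd ℂ) (c j)) := by
        rw [hw, map_sum, Finset.sum_mul_sum]
      rw [hww, Complex.re_sum]
      exact Finset.sum_congr rfl fun i _ => (Complex.re_sum _ _).symm
    have hBB : (∑ i, ∑ j, ‖b i‖ ^ 2 * ‖b j‖ ^ 2) = B * B :=
      (Finset.sum_mul_sum Finset.univ Finset.univ (fun i => ‖b i‖ ^ 2) (fun j => ‖b j‖ ^ 2)).symm
    have hCC : (∑ i, ∑ j, ‖c i‖ ^ 2 * ‖c j‖ ^ 2) = C * C :=
      (Finset.sum_mul_sum Finset.univ Finset.univ (fun i => ‖c i‖ ^ 2) (fun j => ‖c j‖ ^ 2)).symm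
    have split : (∑ i, ∑ j, (‖b i‖ ^ 2 * ‖b j‖ ^ 2 + ‖c i‖ ^ 2 * ‖c j‖ ^ 2
          - 2 * ((b i * (starRingEnd ℂ) (c i))
              * (starRingEnd ℂ) (b j * (starRingEnd ℂ) (c j))).re))
        = (∑ i, ∑ j, ‖b i‖ ^ 2 * ‖b j‖ ^ 2) + (∑ i, ∑ j, ‖c i‖ ^ 2 * ‖c j‖ ^ 2)
          - 2 * (∑ i, ∑ j, ((b i * (starRingEnd ℂ) (c i))
              * (starRingEnd ℂ) (b j * (starRingEnd ℂ) (c j))).re) := by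
      simp only [Finset.sum_sub_distrib, Finset.sum_add_distrib, ← Finset.mul_sum]
    rw [split, hBB, hCC, key]
    have hre2 : (w * (starRingEnd ℂ) w).re = t ^ 2 := by
      rw [Complex.mul_conj, ht, Complex.sq_norm]
      simp
    rw [hre2]; ring
  have hFr : frob (vecMulVec b (star b) - vecMulVec c (star c))
      = Real.sqrt (B ^ 2 + C ^ 2 - 2 * t ^ 2) := by
    simp only [frob]; rw [hfr]
  have hf : ∀ θ : ℝ, vnorm (fun i => Complex.exp (θ * Complex.I) * b i - c i)
      = Real.sqrt (B + C - 2 * (Complex.exp (θ * Complex.I) * w).re) := by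
    intro θ; simp only [vnorm]; rw [hpt θ]
  have hrle : ∀ θ : ℝ, (Complex.exp (θ * Complex.I) * w).re ≤ t := by
    intro θ
    calc (Complex.exp (θ * Complex.I) * w).re
        ≤ ‖Complex.exp (θ * Complex.I) * w‖ := Complex.re_le_norm _
      _ = t := by rw [norm_mul, Complex.norm_exp_ofReal_mul_I, one_mul]
  clear_value B C w t β γ
  constructor
  · apply le_ciInf
    intro θ
    rw [div_le_iff₀ hβγpos, hFr, hf θ]
    set r : ℝ := (Complex.exp (θ * Complex.I) * w).re with hr
    have hrt : r ≤ t := hrle θ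
    have hβγ : (β + γ) ^ 2 = B + C + 2 * (β * γ) := by rw [add_sq, hvb2, hvc2]; ring
    have hbγ0 : 0 ≤ β * γ := mul_nonneg hβ0 hγ0
    have h2p : 2 * (β * γ) ≤ B + C := by nlinarith [sq_nonneg (β - γ)]
    have hSθ : 0 ≤ B + C - 2 * r := by linarith
    calc Real.sqrt (B ^ 2 + C ^ 2 - 2 * t ^ 2)
        ≤ Real.sqrt ((B + C - 2 * r) * (B + C + 2 * (β * γ))) := by
          apply Real.sqrt_le_sqrt
          nlinarith [mul_nonneg (sub_nonneg.2 hrt) (by linarith : (0:ℝ) ≤ B + C + 2 * (β * γ)),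
            mul_nonneg (sub_nonneg.2 hcs) (by linarith : (0:ℝ) ≤ B + C + β * γ - t)]
      _ = Real.sqrt (B + C - 2 * r) * (β + γ) := by
          rw [← hβγ, Real.sqrt_mul hSθ, Real.sqrt_sq hβγpos.le]
  · have hbdd : BddBelow (Set.range fun θ : ℝ =>
        vnorm (fun i => Complex.exp (θ * Complex.I) * b i - c i)) := by
      refine ⟨0, ?_⟩
      rintro x ⟨θ, rfl⟩
      exact Real.sqrt_nonneg _
    have hexp : Complex.exp ((↑(-Complex.arg w) : ℂ) * Complex.I) * w = (t : ℂ) := by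
      calc Complex.exp ((↑(-Complex.arg w) : ℂ) * Complex.I) * w
          = Complex.exp ((↑(-Complex.arg w) : ℂ) * Complex.I) *
              (↑‖w‖ * Complex.exp ((↑(Complex.arg w) : ℂ) * Complex.I)) := by
            rw [Complex.norm_mul_exp_arg_mul_I w]
        _ = ↑‖w‖ *
              Complex.exp ((↑(-Complex.arg w) : ℂ) * Complex.I + (↑(Complex.arg w) : ℂ) * Complex.I) := by
            rw [Complex.exp_add]; ring
        _ = (t : ℂ) := by
            rw [show ((↑(-Complex.arg w) : ℂ) * Complex.I + (↑(Complex.arg w) : ℂ) * Complex.I) = 0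
              by push_cast; ring, Complex.exp_zero, mul_one, ht]
    have hval : vnorm (fun i => Complex.exp ((↑(-Complex.arg w) : ℂ) * Complex.I) * b i - c i)
        = Real.sqrt (B + C - 2 * t) := by
      rw [hf (-Complex.arg w), hexp, Complex.ofReal_re]
    refine le_trans (ciInf_le hbdd (-Complex.arg w)) ?_
    rw [hval, hFr, hvb2, hvc2, le_div_iff₀ (Real.sqrt_pos.2 hBC)]
    calc Real.sqrt (B + C - 2 * t) * Real.sqrt (B + C)
        = Real.sqrt ((B + C - 2 * t) * (B + C)) := (Real.sqrt_mul (by linarith) _).symm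
      _ ≤ Real.sqrt (2 * (B ^ 2 + C ^ 2 - 2 * t ^ 2)) := Real.sqrt_le_sqrt (by
          nlinarith [sq_nonneg (B - C), mul_nonneg ht0 (by linarith : (0:ℝ) ≤ B + C - 2 * t)])
      _ = Real.sqrt 2 * Real.sqrt (B ^ 2 + C ^ 2 - 2 * t ^ 2) := Real.sqrt_mul (by norm_num) _
end

section
/- Let S ∈ ℂ^{d×d} be invertible with polar decomposition S = V Q where V = S (S† S)^{-1/2} is unitary and Q = (S† S)^{1/2} is positive definite. Then among all unitary matrices G ∈ ℂ^{d×d}, the quantity |Tr(G† S)|² is maximized by G = e^{iψ} V for ψ ∈ ℝ, and the maximum value is (Tr Q)². -/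
open Matrix ComplexOrder

lemma trace_unitary_mul_posSemidef_norm_le {d : ℕ} (U Q : Matrix (Fin d) (Fin d) ℂ)
    (hU : U ∈ Matrix.unitaryGroup (Fin d) ℂ) (hQ : Q.PosSemidef) :
    ‖(U * Q).trace‖ ≤ Q.trace.re := by
  have hH := hQ.1
  set W : Matrix (Fin d) (Fin d) ℂ := (hH.eigenvectorUnitary : Matrix (Fin d) (Fin d) ℂ) with hW
  set D : Matrix (Fin d) (Fin d) ℂ :=
    Matrix.diagonal ((Complex.ofReal) ∘ hH.eigenvalues) with hD
  have hspec : Q = W * D * star W := hH.spectral_theorem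
  have hWmem : W ∈ Matrix.unitaryGroup (Fin d) ℂ := hH.eigenvectorUnitary.2
  set M := star W * U * W with hM
  have hMmem : M ∈ Matrix.unitaryGroup (Fin d) ℂ := by
    rw [Matrix.mem_unitaryGroup_iff']
    have e1 : star U * U = 1 := Matrix.mem_unitaryGroup_iff'.mp hU
    have e2 : W * star W = 1 := Matrix.mem_unitaryGroup_iff.mp hWmem
    have e3 : star W * W = 1 := Matrix.mem_unitaryGroup_iff'.mp hWmem
    calc star M * M = star W * star U * ((W * star W) * U) * W := by
          simp [hM, StarMul.star_mul, mul_assoc]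
      _ = 1 := by rw [e2]; simp [mul_assoc, e1, e3]
  have h1 : (U * Q).trace = (M * D).trace := by
    rw [hspec, hM]
    rw [show U * (W * D * star W) = (U * W * D) * star W by simp [mul_assoc]]
    rw [Matrix.trace_mul_comm]
    simp [hM, mul_assoc]
  have h2 : Q.trace = D.trace := by
    rw [hspec, Matrix.trace_mul_comm, ← mul_assoc,
      (Matrix.mem_unitaryGroup_iff'.mp hWmem : star W * W = 1), one_mul]
  have htrD : (M * D).trace = ∑ i, M i i * (hH.eigenvalues i : ℂ) := by
    simp [Matrix.trace, Matrix.diag, hD, Matrix.mul_diagonal]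
  have hDtr : D.trace.re = ∑ i, hH.eigenvalues i := by
    simp [Matrix.trace, Matrix.diag, hD, Complex.re_sum]
  rw [h1, htrD, h2, hDtr]
  calc ‖∑ i, M i i * (hH.eigenvalues i : ℂ)‖
      ≤ ∑ i, ‖M i i * (hH.eigenvalues i : ℂ)‖ := norm_sum_le _ _
    _ ≤ ∑ i, hH.eigenvalues i := by
        apply Finset.sum_le_sum
        intro i _
        have h3 : ‖M i i‖ ≤ 1 := entry_norm_bound_of_unitary hMmem i i
        have h4 : (0:ℝ) ≤ hH.eigenvalues i := hQ.eigenvalues_nonneg i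
        rw [norm_mul, Complex.norm_real, Real.norm_of_nonneg h4]
        nlinarith

theorem polar_maximizes_trace {d : ℕ} (S V Q : Matrix (Fin d) (Fin d) ℂ)
    (hS : IsUnit S.det) (hQ : Q.PosDef) (hQsq : Q * Q = Sᴴ * S)
    (hV : Vᴴ * V = 1) (hpolar : S = V * Q) :
    (∀ G : Matrix (Fin d) (Fin d) ℂ, Gᴴ * G = 1 →
        ‖(Gᴴ * S).trace‖ ^ 2 ≤ (Q.trace.re) ^ 2) ∧
      ∀ ψ : ℝ, ‖((Complex.exp (ψ * Complex.I) • V)ᴴ * S).trace‖ ^ 2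
        = (Q.trace.re) ^ 2 := by
  have hQps : Q.PosSemidef := hQ.posSemidef
  have him : Q.trace.im = 0 := by
    have := hQ.1
    have : ∀ i, (Q i i).im = 0 := by
      intro i
      have h := congrFun (congrFun hQ.1.symm i) i
      simp [Matrix.conjTranspose_apply] at h
      have := congrArg Complex.im h
      simp [Complex.conj_im] at this
      linarith [this]
    simp [Matrix.trace, Matrix.diag, Complex.im_sum, this]
  have hVS : Vᴴ * S = Q := by rw [hpolar, ← mul_assoc, hV, one_mul]
  constructor
  · intro G hG
    have hGG : G * Gᴴ = 1 := mul_eq_one_comm.mp hG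
    have hU : Gᴴ * V ∈ Matrix.unitaryGroup (Fin d) ℂ := by
      rw [Matrix.mem_unitaryGroup_iff']
      rw [Matrix.star_eq_conjTranspose, Matrix.conjTranspose_mul,
        Matrix.conjTranspose_conjTranspose]
      calc Vᴴ * G * (Gᴴ * V) = Vᴴ * (G * Gᴴ) * V := by simp [mul_assoc]
        _ = 1 := by rw [hGG, mul_one, hV]
    have key : ‖((Gᴴ * V) * Q).trace‖ ≤ Q.trace.re :=
      trace_unitary_mul_posSemidef_norm_le _ _ hU hQps
    have : Gᴴ * S = (Gᴴ * V) * Q := by rw [hpolar, mul_assoc]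
    rw [this]
    exact pow_le_pow_left₀ (norm_nonneg _) key 2
  · intro ψ
    have : ((Complex.exp (ψ * Complex.I) • V)ᴴ * S).trace
        = (starRingEnd ℂ) (Complex.exp (ψ * Complex.I)) * Q.trace := by
      rw [Matrix.conjTranspose_smul, Matrix.smul_mul, hVS, Matrix.trace_smul, smul_eq_mul]
      rfl
    rw [this, norm_mul]
    have habs : ‖(starRingEnd ℂ) (Complex.exp (ψ * Complex.I))‖ = 1 := by
      rw [RCLike.norm_conj]
      exact Complex.norm_exp_ofReal_mul_I ψ
    rw [habs, one_mul]
    have : ‖Q.trace‖ ^ 2 = Q.trace.re ^ 2 + Q.trace.im ^ 2 := by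
      rw [Complex.sq_norm, Complex.normSq_apply]; ring
    rw [this, him]; ring
end
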